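/- Let n = 2r+1 and X_3 be the tridiagonal skew-symmetric matrix of order n with superdiagonal entries x_{12}, x_{23}, …, x_{n−1,n}. Then the ideal Pf_{n−1}(X_3) of maximal-order Pfaffians of X_3 is the monomial ideal generated by the r+1 squarefree monomials p_1 = ∏_{k=1}^r x_{2k,2k+1} and, for i = 2p+1 with 1 ≤ p ≤ r, p_i = x_{12} · ∏_{odd j with 3 ≤ j < i} x_{j,j+1} · ∏_{even k with i < k ≤ 2r} x_{k,k+1}. -/

import Mathlib

open MvPolynomial

variable {K : Type*} [Field K]

/-- The variable `x_{v+1, v+2}` (one-based) of the tridiagonal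
skew-symmetric matrix, i.e. the `v`-th superdiagonal variable (zero-based),
in `K[x_{12}, x_{23}, …, x_{n−1,n}]` with `n = 2r+1`. -/
noncomputable def xvar (r : ℕ) (K : Type*) [Field K] (v : ℕ) :
    MvPolynomial (Fin (2 * r)) K :=
  if h : v < 2 * r then X ⟨v, h⟩ else 1

/-- The monomial generators of the Pfaffian ideal of the tridiagonal
skew-symmetric matrix: `p_1 = ∏_{k=1}^r x_{2k,2k+1}`, and for `i = 2p+1`
with `1 ≤ p ≤ r`, `p_i = x_{12} · ∏_{odd j, 3 ≤ j < i} x_{j,j+1} ·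
∏_{even k, i < k ≤ 2r} x_{k,k+1}` (here indexed by `j = 0` for `p_1` and
`j = p` for `p_{2p+1}`). -/
noncomputable def pgen (r : ℕ) (K : Type*) [Field K] (j : Fin (r + 1)) :
    MvPolynomial (Fin (2 * r)) K :=
  if j.val = 0 then ∏ t ∈ Finset.range r, xvar r K (2 * t + 1)
  else
    xvar r K 0 * (∏ t ∈ Finset.Ico 1 j.val, xvar r K (2 * t)) *
      ∏ t ∈ Finset.Ico j.val r, xvar r K (2 * t + 1)

/-- The Pfaffian of a `2m × 2m` matrix over a `ℚ`-algebra, via the summation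
formula `Pf(M) = (1/(2^m m!)) ∑_σ sgn(σ) ∏_i M_{σ(2i-1), σ(2i)}`. -/
noncomputable def pfaffian (m : ℕ) {R : Type*} [CommRing R] [Algebra ℚ R]
    (M : Matrix (Fin (2 * m)) (Fin (2 * m)) R) : R :=
  ((2 ^ m * Nat.factorial m : ℚ)⁻¹) •
    ∑ σ : Equiv.Perm (Fin (2 * m)),
      ((Equiv.Perm.sign σ : ℤ) : R) *
        ∏ i : Fin m,
          M (σ ⟨2 * i.val, by have := i.isLt; omega⟩)
            (σ ⟨2 * i.val + 1, by have := i.isLt; omega⟩)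

/-- The tridiagonal skew-symmetric matrix `X₃` of order `n = 2r+1`, with
`(X₃)_{i,i+1} = x_{i,i+1}`, `(X₃)_{i+1,i} = −x_{i,i+1}`, all other entries
zero. -/
noncomputable def triSkew (r : ℕ) (K : Type*) [Field K] :
    Matrix (Fin (2 * r + 1)) (Fin (2 * r + 1)) (MvPolynomial (Fin (2 * r)) K) :=
  fun i j =>
    if (j : ℕ) = (i : ℕ) + 1 then xvar r K i.val
    else if (i : ℕ) = (j : ℕ) + 1 then - xvar r K j.val
    else 0

/-- `Pf_{\bar l}(X₃)`: the Pfaffian of the submatrix of `X₃` obtained by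
deleting row and column `l`. -/
noncomputable def pfBarTri (r : ℕ) (K : Type*) [Field K] [CharZero K]
    (l : Fin (2 * r + 1)) : MvPolynomial (Fin (2 * r)) K :=
  pfaffian r ((triSkew r K).submatrix l.succAbove l.succAbove)

section Aux

open Equiv Finset

/-- pairing equivalence -/
def pairE (r : ℕ) : Fin r × Bool ≃ Fin (2 * r) where
  toFun p := ⟨2 * p.1.val + p.2.toNat, by rcases p with ⟨⟨i, hi⟩, b⟩; cases b <;> simp <;> omega⟩
  invFun x := (⟨x.val / 2, by have := x.isLt; omega⟩, decide (x.val % 2 = 1))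
  left_inv := by
    rintro ⟨⟨i, hi⟩, b⟩
    cases b <;> simp [Prod.ext_iff, Fin.ext_iff] <;> omega
  right_inv := by
    rintro ⟨x, hx⟩
    by_cases h : x % 2 = 1 <;> simp [h, Fin.ext_iff] <;> omega

/-- the even anchor indices -/
def dl (r : ℕ) (i : Fin r) : Fin (2 * r) := ⟨2 * i.val, by have := i.isLt; omega⟩

/-- the odd anchor indices -/
def dr (r : ℕ) (i : Fin r) : Fin (2 * r) := ⟨2 * i.val + 1, by have := i.isLt; omega⟩

lemma pairE_false {r : ℕ} (i : Fin r) : pairE r (i, false) = dl r i := by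
  simp [pairE, dl, Fin.ext_iff]

lemma pairE_true {r : ℕ} (i : Fin r) : pairE r (i, true) = dr r i := by
  simp [pairE, dr, Fin.ext_iff]

/-- the boolean negation permutation -/
def notP : Equiv.Perm Bool :=
  ⟨Bool.not, Bool.not, fun b => by cases b <;> rfl, fun b => by cases b <;> rfl⟩

lemma notP_apply (b : Bool) : notP b = !b := rfl

lemma sign_notP : Equiv.Perm.sign notP = -1 := by
  have : notP = Equiv.swap false true := by
    apply Equiv.ext; intro b; cases b <;> simp [notP_apply]
  rw [this, Equiv.Perm.sign_swap (by decide)]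

/-- uniqueness of the perfect matching of a path -/
lemma matching_unique {n : ℕ} (M : Fin n → Fin n) (hinv : ∀ x, M (M x) = x)
    (hadj : ∀ x, ((M x).val = x.val + 1) ∨ (x.val = (M x).val + 1)) :
    ∀ x : Fin n, x.val % 2 = 0 → (M x).val = x.val + 1 := by
  suffices h : ∀ k, ∀ x : Fin n, x.val = k → k % 2 = 0 → (M x).val = k + 1 by
    intro x hx; exact h x.val x rfl hx
  intro k
  induction k using Nat.strong_induction_on with
  | _ k IH =>
    intro x hx hk
    rcases hadj x with h | h
    · omega
    · exfalso
      have hx2 : 2 ≤ x.val := by omega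
      set z : Fin n := ⟨x.val - 2, by omega⟩ with hz
      have hz2 : (M z).val = (x.val - 2) + 1 := IH (x.val - 2) (by omega) z rfl (by omega)
      have hMzx : M z = M x := by apply Fin.ext; omega
      have := congrArg M hMzx
      rw [hinv, hinv] at this
      have : z.val = x.val := congrArg Fin.val this
      simp [hz] at this
      omega

/-- the pair-swapping involution -/
def tauP (r : ℕ) : Equiv.Perm (Fin (2 * r)) :=
  (pairE r).permCongr (Equiv.prodCongrRight fun _ : Fin r => notP)

lemma tauP_apply {r : ℕ} (i : Fin r) (b : Bool) :
    tauP r (pairE r (i, b)) = pairE r (i, !b) := by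
  simp [tauP, Equiv.permCongr_apply, Equiv.prodCongrRight_apply, notP_apply]

lemma tauP_invol {r : ℕ} (x : Fin (2 * r)) : tauP r (tauP r x) = x := by
  obtain ⟨⟨i, b⟩, rfl⟩ : ∃ y, pairE r y = x := ⟨(pairE r).symm x, (pairE r).apply_symm_apply x⟩
  rw [tauP_apply, tauP_apply, Bool.not_not]

/-- the parametrization of permutations respecting the standard pairing -/
def EP (r : ℕ) (fe : Equiv.Perm (Fin r) × (Fin r → Bool)) : Equiv.Perm (Fin (2 * r)) :=
  (pairE r).permCongr
    ((Equiv.prodCongrLeft fun _ : Bool => fe.1) *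
      (Equiv.prodCongrRight fun i => if fe.2 i then notP else 1))

lemma EP_apply {r : ℕ} (fe : Equiv.Perm (Fin r) × (Fin r → Bool)) (i : Fin r) (b : Bool) :
    EP r fe (pairE r (i, b)) = pairE r (fe.1 i, if fe.2 i then !b else b) := by
  simp only [EP, Equiv.permCongr_apply, Equiv.symm_apply_apply, Equiv.Perm.mul_apply,
    Equiv.prodCongrRight_apply, Equiv.prodCongrLeft_apply]
  congr 1
  split <;> rfl

lemma sign_EP {r : ℕ} (fe : Equiv.Perm (Fin r) × (Fin r → Bool)) :
    Equiv.Perm.sign (EP r fe) = ∏ i : Fin r, (if fe.2 i then (-1 : ℤˣ) else 1) := by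
  rw [EP, Equiv.Perm.sign_permCongr, map_mul, Equiv.Perm.sign_prodCongrLeft,
    Equiv.Perm.sign_prodCongrRight]
  rw [Fintype.prod_bool]
  rw [Int.units_mul_self, one_mul]
  refine Finset.prod_congr rfl fun i _ => ?_
  split <;> simp [sign_notP]

lemma EP_injective (r : ℕ) : Function.Injective (EP r) := by
  intro fe fe' h
  have key : ∀ i : Fin r, (fe.1 i, fe.2 i) = (fe'.1 i, fe'.2 i) := by
    intro i
    apply (pairE r).injective
    have h1 := EP_apply fe i false
    have h2 := EP_apply fe' i false
    have : EP r fe (pairE r (i, false)) = EP r fe' (pairE r (i, false)) := by rw [h]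
    rw [h1, h2] at this
    rcases hb : fe.2 i <;> rcases hb' : fe'.2 i <;> simp_all
  have h1 : fe.1 = fe'.1 := Equiv.ext fun i => (Prod.mk.injEq _ _ _ _).mp (key i) |>.1
  have h2 : fe.2 = fe'.2 := funext fun i => (Prod.mk.injEq _ _ _ _).mp (key i) |>.2
  exact Prod.ext h1 h2

/-- The central computation: the Pfaffian of a matrix supported on the
superdiagonal/subdiagonal is the product of anchored entries. -/
lemma pfaffian_path {r : ℕ} {R : Type*} [CommRing R] [IsDomain R] [Algebra ℚ R]
    (N : Matrix (Fin (2 * r)) (Fin (2 * r)) R)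
    (hskew : ∀ i j, N j i = - N i j)
    (hne : ∀ i j, N i j ≠ 0 → (j.val = i.val + 1 ∨ i.val = j.val + 1)) :
    pfaffian r N = ∏ i : Fin r, N (dl r i) (dr r i) := by
  classical
  set P : R := ∏ i : Fin r, N (dl r i) (dr r i) with hP
  set T : Equiv.Perm (Fin (2 * r)) → R := fun σ =>
    ((Equiv.Perm.sign σ : ℤ) : R) * ∏ i : Fin r, N (σ (dl r i)) (σ (dr r i)) with hT
  have hTE : ∀ fe, T (EP r fe) = P := by
    rintro ⟨f, ε⟩
    have hcast : ∀ s : Finset (Fin r),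
        (((∏ i ∈ s, (if ε i then (-1 : ℤˣ) else 1)) : ℤˣ) : ℤ) =
          ∏ i ∈ s, (if ε i then (-1 : ℤ) else 1) := by
      intro s
      induction s using Finset.induction_on with
      | empty => simp
      | insert _ _ h ih =>
        rw [Finset.prod_insert h, Finset.prod_insert h, Units.val_mul, ih]
        congr 1
        split <;> rfl
    have hsgn : ((Equiv.Perm.sign (EP r (f, ε)) : ℤ) : R) =
        ∏ i : Fin r, (if ε i then (-1 : R) else 1) := by
      rw [sign_EP]
      rw [hcast, Int.cast_prod]
      refine Finset.prod_congr rfl fun i _ => ?_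
      split <;> simp
    have hfac : ∀ i : Fin r, N (EP r (f, ε) (dl r i)) (EP r (f, ε) (dr r i)) =
        (if ε i then (-1 : R) else 1) * N (dl r (f i)) (dr r (f i)) := by
      intro i
      rw [← pairE_false i, ← pairE_true i, EP_apply, EP_apply]
      cases h : ε i
      · simp only [h, Bool.false_eq_true, if_false]
        rw [pairE_false, pairE_true, one_mul]
      · simp only [h, if_true, Bool.not_false, Bool.not_true]
        rw [pairE_false, pairE_true, hskew (dl r (f i)) (dr r (f i)), neg_one_mul]
  -- assemble
    calc T (EP r (f, ε))
        = (∏ i : Fin r, (if ε i then (-1 : R) else 1)) *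
            ((∏ i : Fin r, (if ε i then (-1 : R) else 1)) *
              ∏ i : Fin r, N (dl r (f i)) (dr r (f i))) := by
          rw [hT]
          simp only
          rw [hsgn]
          congr 1
          rw [← Finset.prod_mul_distrib]
          exact Finset.prod_congr rfl fun i _ => hfac i
      _ = P := by
          rw [← mul_assoc, ← Finset.prod_mul_distrib]
          have h1 : (∏ i : Fin r, ((if ε i then (-1 : R) else 1) *
              (if ε i then (-1 : R) else 1))) = 1 := by
            rw [Finset.prod_eq_one]
            intro i _
            split <;> ring
          rw [h1, one_mul, hP]
          exact Equiv.prod_comp f fun j => N (dl r j) (dr r j)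
  have hgood : ∀ σ : Equiv.Perm (Fin (2 * r)), T σ ≠ 0 → ∃ fe, EP r fe = σ := by
    intro σ hσ
    have hprod : ∀ i : Fin r, N (σ (dl r i)) (σ (dr r i)) ≠ 0 := by
      have : (∏ i : Fin r, N (σ (dl r i)) (σ (dr r i))) ≠ 0 :=
        right_ne_zero_of_mul hσ
      intro i
      exact Finset.prod_ne_zero_iff.mp this i (Finset.mem_univ i)
    set M : Fin (2 * r) → Fin (2 * r) := fun x => σ (tauP r (σ.symm x)) with hM
    have hinv : ∀ x, M (M x) = x := by
      intro x
      simp only [hM, Equiv.symm_apply_apply, tauP_invol, Equiv.apply_symm_apply]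
    have hadj : ∀ x, ((M x).val = x.val + 1) ∨ (x.val = (M x).val + 1) := by
      intro x
      obtain ⟨⟨i, b⟩, hy⟩ : ∃ y, pairE r y = σ.symm x :=
        ⟨(pairE r).symm (σ.symm x), (pairE r).apply_symm_apply _⟩
      have hx : x = σ (pairE r (i, b)) := by rw [hy, Equiv.apply_symm_apply]
      have hMx : M x = σ (pairE r (i, !b)) := by
        show σ (tauP r (σ.symm x)) = _
        rw [← hy, tauP_apply]
      cases b
      · rw [hMx, hx]
        simp only [Bool.not_false]
        rw [pairE_false, pairE_true]
        exact hne _ _ (hprod i)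
      · rw [hMx, hx]
        simp only [Bool.not_true]
        rw [pairE_false, pairE_true]
        rcases hne _ _ (hprod i) with h | h
        · right; exact h
        · left; exact h
    have heven := matching_unique M hinv hadj
    have hMtau : ∀ x, M x = tauP r x := by
      intro x
      obtain ⟨⟨i, b⟩, rfl⟩ : ∃ y, pairE r y = x := ⟨(pairE r).symm x, (pairE r).apply_symm_apply x⟩
      cases b
      · rw [tauP_apply]
        apply Fin.ext
        have h1 : (pairE r (i, false)).val = 2 * i.val := by rw [pairE_false]; rfl
        have h2 := heven (pairE r (i, false)) (by rw [h1]; omega)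
        rw [h2, h1]
        rw [show pairE r (i, !false) = dr r i from pairE_true i]
        rfl
      · have h0 : M (pairE r (i, false)) = pairE r (i, true) := by
          have h1 : (pairE r (i, false)).val = 2 * i.val := by rw [pairE_false]; rfl
          have h2 := heven (pairE r (i, false)) (by rw [h1]; omega)
          apply Fin.ext
          rw [h2, h1, pairE_true]
          rfl
        have := congrArg M h0
        rw [hinv] at this
        rw [← this, tauP_apply, Bool.not_true]
    have hcomm : ∀ y, σ (tauP r y) = tauP r (σ y) := by
      intro y
      have := hMtau (σ y)
      rw [hM] at this
      simp only [Equiv.symm_apply_apply] at this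
      rw [this]
    have hcomm' : ∀ y, σ.symm (tauP r y) = tauP r (σ.symm y) := by
      intro y
      apply σ.injective
      rw [Equiv.apply_symm_apply, hcomm, Equiv.apply_symm_apply]
    -- build the permutation on pairs
    refine ⟨(⟨fun i => ((pairE r).symm (σ (pairE r (i, false)))).1,
             fun i => ((pairE r).symm (σ.symm (pairE r (i, false)))).1, ?_, ?_⟩,
            fun i => ((pairE r).symm (σ (pairE r (i, false)))).2), ?_⟩
    · -- left inverse
      intro i
      beta_reduce
      obtain ⟨⟨j, b⟩, hjb⟩ : ∃ y, pairE r y = σ (pairE r (i, false)) :=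
        ⟨(pairE r).symm _, (pairE r).apply_symm_apply _⟩
      have hfst : ((pairE r).symm (σ (pairE r (i, false)))).1 = j := by
        rw [← hjb, Equiv.symm_apply_apply]
      rw [hfst]
      cases b
      · have : σ.symm (pairE r (j, false)) = pairE r (i, false) := by
          rw [hjb, Equiv.symm_apply_apply]
        rw [this, Equiv.symm_apply_apply]
      · have h1 : σ (pairE r (i, true)) = pairE r (j, false) := by
          have := hcomm (pairE r (i, false))
          rw [tauP_apply, ← hjb, tauP_apply] at this
          simpa using this
        have : σ.symm (pairE r (j, false)) = pairE r (i, true) := by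
          rw [← h1, Equiv.symm_apply_apply]
        rw [this, Equiv.symm_apply_apply]
    · -- right inverse
      intro j
      beta_reduce
      obtain ⟨⟨i, b⟩, hib⟩ : ∃ y, pairE r y = σ.symm (pairE r (j, false)) :=
        ⟨(pairE r).symm _, (pairE r).apply_symm_apply _⟩
      have hfst : ((pairE r).symm (σ.symm (pairE r (j, false)))).1 = i := by
        rw [← hib, Equiv.symm_apply_apply]
      rw [hfst]
      cases b
      · have : σ (pairE r (i, false)) = pairE r (j, false) := by
          rw [hib, Equiv.apply_symm_apply]
        rw [this, Equiv.symm_apply_apply]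
      · have h1 : σ (pairE r (i, true)) = pairE r (j, false) := by
          rw [hib, Equiv.apply_symm_apply]
        have : σ (pairE r (i, false)) = pairE r (j, true) := by
          have := hcomm (pairE r (i, true))
          rw [tauP_apply, h1, tauP_apply] at this
          simpa using this
        rw [this, Equiv.symm_apply_apply]
    · -- EP fe = σ
      apply Equiv.ext
      intro x
      obtain ⟨⟨i, b⟩, rfl⟩ : ∃ y, pairE r y = x := ⟨(pairE r).symm x, (pairE r).apply_symm_apply x⟩
      rw [EP_apply]
      simp only [Equiv.coe_fn_mk]
      beta_reduce
      obtain ⟨⟨j, c⟩, hjc⟩ : ∃ y, pairE r y = σ (pairE r (i, false)) :=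
        ⟨(pairE r).symm _, (pairE r).apply_symm_apply _⟩
      have hfst : ((pairE r).symm (σ (pairE r (i, false)))).1 = j := by
        rw [← hjc, Equiv.symm_apply_apply]
      have hsnd : ((pairE r).symm (σ (pairE r (i, false)))).2 = c := by
        rw [← hjc, Equiv.symm_apply_apply]
      rw [hfst]
      simp only [hsnd]
      have h1 : σ (pairE r (i, true)) = pairE r (j, !c) := by
        have := hcomm (pairE r (i, false))
        rw [tauP_apply, ← hjc, tauP_apply] at this
        simpa using this
      cases b
      · rw [← hjc]
        congr 1
        cases c <;> rfl
      · rw [h1]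
        congr 1
        cases c <;> rfl
  -- now the main computation
  have hsum : ∑ σ : Equiv.Perm (Fin (2 * r)), T σ =
      ∑ fe : Equiv.Perm (Fin r) × (Fin r → Bool), P := by
    rw [show (∑ fe : Equiv.Perm (Fin r) × (Fin r → Bool), P) =
        ∑ fe : Equiv.Perm (Fin r) × (Fin r → Bool), T (EP r fe) from
      Finset.sum_congr rfl fun fe _ => (hTE fe).symm]
    symm
    refine Finset.sum_of_injOn (EP r) ((EP_injective r).injOn) (by simp) ?_ (fun fe _ => rfl)
    intro σ _ hσ
    by_contra h
    obtain ⟨fe, hfe⟩ := hgood σ h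
    exact hσ ⟨fe, by simp, hfe⟩
  have hcard : ∑ fe : Equiv.Perm (Fin r) × (Fin r → Bool), P =
      (Nat.factorial r * 2 ^ r) • P := by
    rw [Finset.sum_const, Finset.card_univ, Fintype.card_prod, Fintype.card_perm,
      Fintype.card_fin, Fintype.card_fun, Fintype.card_bool, Fintype.card_fin]
  have : pfaffian r N = ((2 ^ r * Nat.factorial r : ℚ)⁻¹) • ∑ σ : Equiv.Perm (Fin (2 * r)), T σ := by
    rfl
  rw [this, hsum, hcard, ← Nat.cast_smul_eq_nsmul ℚ, smul_smul]
  rw [show ((2 ^ r * Nat.factorial r : ℚ)⁻¹ * ((Nat.factorial r * 2 ^ r : ℕ) : ℚ)) = 1 by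
    push_cast
    rw [mul_comm ((Nat.factorial r : ℚ)) _]
    rw [inv_mul_cancel₀ (by positivity)]]
  rw [one_smul]

end Aux

section Matrix

open Finset

lemma succAbove_val {n : ℕ} (l : Fin (n + 1)) (i : Fin n) :
    (l.succAbove i : ℕ) = if i.val < l.val then i.val else i.val + 1 := by
  rw [Fin.succAbove]
  split
  · next h =>
      rw [Fin.lt_def, Fin.coe_castSucc] at h
      rw [if_pos h, Fin.coe_castSucc]
  · next h =>
      rw [Fin.lt_def, Fin.coe_castSucc] at h
      rw [if_neg h, Fin.val_succ]

lemma triSkew_skew (r : ℕ) (K : Type*) [Field K] (a b : Fin (2 * r + 1)) :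
    triSkew r K b a = - triSkew r K a b := by
  simp only [triSkew]
  split_ifs <;> first | omega | simp

lemma triNe (r : ℕ) (K : Type*) [Field K] (l : Fin (2 * r + 1)) (i j : Fin (2 * r))
    (h : ((triSkew r K).submatrix l.succAbove l.succAbove) i j ≠ 0) :
    j.val = i.val + 1 ∨ i.val = j.val + 1 := by
  by_contra hc
  push_neg at hc
  apply h
  have hi := succAbove_val l i
  have hj := succAbove_val l j
  have key : ((l.succAbove j) : ℕ) ≠ ((l.succAbove i) : ℕ) + 1 ∧
      ((l.succAbove i) : ℕ) ≠ ((l.succAbove j) : ℕ) + 1 := by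
    constructor <;> (split_ifs at hi hj <;> omega)
  show triSkew r K (l.succAbove i) (l.succAbove j) = 0
  simp only [triSkew]
  rw [if_neg key.1, if_neg key.2]

lemma pfBar_eq_prod (r : ℕ) (K : Type*) [Field K] [CharZero K] (l : Fin (2 * r + 1)) :
    pfBarTri r K l =
      ∏ i : Fin r, ((triSkew r K).submatrix l.succAbove l.succAbove) (dl r i) (dr r i) := by
  show pfaffian r _ = _
  apply pfaffian_path
  · intro i j
    exact triSkew_skew r K (l.succAbove i) (l.succAbove j)
  · exact triNe r K l

lemma entry_val (r : ℕ) (K : Type*) [Field K] (l : Fin (2 * r + 1)) (i : Fin r) :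
    ((triSkew r K).submatrix l.succAbove l.succAbove) (dl r i) (dr r i) =
      if l.val ≤ 2 * i.val then xvar r K (2 * i.val + 1)
      else if l.val = 2 * i.val + 1 then 0 else xvar r K (2 * i.val) := by
  have hi := succAbove_val l (dl r i)
  have hj := succAbove_val l (dr r i)
  have hdl : (dl r i).val = 2 * i.val := rfl
  have hdr : (dr r i).val = 2 * i.val + 1 := rfl
  rw [hdl] at hi
  rw [hdr] at hj
  show triSkew r K (l.succAbove (dl r i)) (l.succAbove (dr r i)) = _
  simp only [triSkew]
  by_cases h1 : l.val ≤ 2 * i.val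
  · have e1 : ((l.succAbove (dl r i)) : ℕ) = 2 * i.val + 1 := by rw [hi, if_neg (by omega)]
    have e2 : ((l.succAbove (dr r i)) : ℕ) = 2 * i.val + 2 := by rw [hj, if_neg (by omega)]
    rw [e1, e2, if_pos (by omega), if_pos h1]
  · by_cases h2 : l.val = 2 * i.val + 1
    · have e1 : ((l.succAbove (dl r i)) : ℕ) = 2 * i.val := by rw [hi, if_pos (by omega)]
      have e2 : ((l.succAbove (dr r i)) : ℕ) = 2 * i.val + 2 := by rw [hj, if_neg (by omega)]
      rw [e1, e2, if_neg (by omega), if_neg (by omega), if_neg h1, if_pos h2]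
    · have e1 : ((l.succAbove (dl r i)) : ℕ) = 2 * i.val := by rw [hi, if_pos (by omega)]
      have e2 : ((l.succAbove (dr r i)) : ℕ) = 2 * i.val + 1 := by rw [hj, if_pos (by omega)]
      rw [e1, e2, if_pos (by omega), if_neg h1, if_neg h2]

lemma pfBar_even (r : ℕ) (K : Type*) [Field K] [CharZero K] (p : ℕ) (hp : p ≤ r) :
    pfBarTri r K ⟨2 * p, by omega⟩ = pgen r K ⟨p, by omega⟩ := by
  rw [pfBar_eq_prod]
  have hent : ∀ i : Fin r,
      ((triSkew r K).submatrix (Fin.succAbove ⟨2 * p, by omega⟩)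
          (Fin.succAbove ⟨2 * p, by omega⟩)) (dl r i) (dr r i) =
        if p ≤ i.val then xvar r K (2 * i.val + 1) else xvar r K (2 * i.val) := by
    intro i
    rw [entry_val]
    by_cases h : p ≤ i.val
    · rw [if_pos (by show 2 * p ≤ 2 * i.val; omega), if_pos h]
    · rw [if_neg (by show ¬ (2 * p ≤ 2 * i.val); omega),
        if_neg (by show ¬ (2 * p = 2 * i.val + 1); omega), if_neg h]
  rw [Finset.prod_congr rfl fun i _ => hent i]
  rw [Fin.prod_univ_eq_prod_range (fun k => if p ≤ k then xvar r K (2 * k + 1)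
    else xvar r K (2 * k)) r]
  rw [Finset.range_eq_Ico, ← Finset.prod_Ico_consecutive _ (Nat.zero_le p) hp]
  rw [Finset.prod_congr rfl (fun k hk => if_neg (by rw [Finset.mem_Ico] at hk; omega) :
    ∀ k ∈ Finset.Ico 0 p, _ = xvar r K (2 * k))]
  rw [Finset.prod_congr rfl (fun k hk => if_pos (by rw [Finset.mem_Ico] at hk; omega) :
    ∀ k ∈ Finset.Ico p r, _ = xvar r K (2 * k + 1))]
  by_cases hp0 : p = 0
  · subst hp0
    rw [pgen, if_pos rfl]
    rw [Finset.Ico_self, Finset.prod_empty, one_mul, Finset.range_eq_Ico]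
  · rw [pgen, if_neg hp0]
    rw [Finset.prod_eq_prod_Ico_succ_bot (by omega : 0 < p) (fun k => xvar r K (2 * k))]

lemma pfBar_odd (r : ℕ) (K : Type*) [Field K] [CharZero K] (p : ℕ) (hp : p < r) :
    pfBarTri r K ⟨2 * p + 1, by omega⟩ = 0 := by
  rw [pfBar_eq_prod]
  apply Finset.prod_eq_zero (Finset.mem_univ (⟨p, hp⟩ : Fin r))
  rw [entry_val]
  rw [if_neg (by show ¬ (2 * p + 1 ≤ 2 * p); omega), if_pos rfl]

end Matrix

/-- the ideal `Pf_{n−1}(X₃)` of maximal-order Pfaffians of the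
tridiagonal skew-symmetric matrix `X₃` of order `n = 2r+1` equals the
monomial ideal generated by the `r+1` squarefree monomials
`p_1 = ∏_{k=1}^r x_{2k,2k+1}` and, for `i = 2p+1` with `1 ≤ p ≤ r`,
`p_i = x_{12} · ∏_{odd j, 3 ≤ j < i} x_{j,j+1} · ∏_{even k, i < k ≤ 2r} x_{k,k+1}`. -/
theorem pfaffianIdeal_tridiagonal_eq_monomialIdeal
    (r : ℕ) (K : Type*) [Field K] [CharZero K] :
    Ideal.span {p : MvPolynomial (Fin (2 * r)) K |
        ∃ l : Fin (2 * r + 1), p = pfBarTri r K l} =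
      Ideal.span (Set.range (pgen r K)) := by
  apply le_antisymm
  · rw [Ideal.span_le]
    rintro q ⟨l, rfl⟩
    rcases Nat.even_or_odd l.val with ⟨p, hp⟩ | ⟨p, hp⟩
    · have hpr : p ≤ r := by have := l.isLt; omega
      have hl : l = ⟨2 * p, by omega⟩ := Fin.ext (show l.val = 2 * p by omega)
      rw [hl, pfBar_even r K p hpr]
      exact Ideal.subset_span ⟨⟨p, by omega⟩, rfl⟩
    · have hpr : p < r := by have := l.isLt; omega
      have hl : l = ⟨2 * p + 1, by omega⟩ := Fin.ext (show l.val = 2 * p + 1 by omega)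
      rw [hl, pfBar_odd r K p hpr]
      exact Ideal.zero_mem _
  · rw [Ideal.span_le]
    rintro q ⟨j, rfl⟩
    have hj : j.val ≤ r := by have := j.isLt; omega
    have key : pgen r K j = pfBarTri r K ⟨2 * j.val, by omega⟩ := by
      have hjj : (⟨j.val, by omega⟩ : Fin (r + 1)) = j := Fin.ext rfl
      rw [pfBar_even r K j.val hj, hjj]
    rw [key]
    exact Ideal.subset_span ⟨⟨2 * j.val, by omega⟩, rfl⟩
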